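/- With G_*, P_*, N_* and Γ_n as above, the face and degeneracy functors on the groupoids Γ_* satisfy the simplicial identity d_i d_j = d_{j-1} d_i for i < j; concretely, for every [σ, f] ∈ Γ_n and i < j, d_{d_j(σ)⁻¹(i)}(d_{σ⁻¹(j)}(f)) = d_{d_i(σ)⁻¹(j-1)}(d_{σ⁻¹(i)}(f)). -/
import Mathlib


open Equiv

namespace CSGPaper

/-- Transport of a permutation along an equality of index sets. -/
def pcast {a b : ℕ} (h : a = b) (σ : Perm (Fin a)) : Perm (Fin b) :=
  Equiv.permCongr (finCongr h) σ

/-- Block sum of permutations: `σ` acts on the first `a` points, `τ` on the last `b`. -/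
def bsum {a b : ℕ} (σ : Perm (Fin a)) (τ : Perm (Fin b)) : Perm (Fin (a + b)) :=
  Equiv.permCongr finSumFinEquiv (Equiv.sumCongr σ τ)

/-- The degeneracy `s_i` on permutations: duplicate the point `i` in the target and
`σ⁻¹ i` in the source, renumbering order-preservingly. -/
def pdegen {a : ℕ} (i : Fin a) (σ : Perm (Fin a)) : Perm (Fin (a + 1)) :=
  (finSuccEquiv' ((σ.symm i).succ)).trans
    ((Equiv.optionCongr σ).trans (finSuccEquiv' i.succ).symm)

/-- The face `d_i` on permutations: delete the point `i` in the target and `σ⁻¹ i`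
in the source, renumbering order-preservingly. -/
def pface {a : ℕ} (i : Fin (a + 1)) (σ : Perm (Fin (a + 1))) : Perm (Fin a) :=
  Equiv.removeNone ((finSuccEquiv' (σ.symm i)).symm.trans (σ.trans (finSuccEquiv' i)))

/-- The `m`-fold iterated degeneracy at `i` (replacing the point `i` by `m+1` points). -/
def pdegenIter {a : ℕ} (i : Fin a) (σ : Perm (Fin a)) : (m : ℕ) → Perm (Fin (a + m))
  | 0 => σ
  | m + 1 => pdegen (Fin.castLE (Nat.le_add_right a m) i) (pdegenIter i σ m)

/-- `1_i ⊞ τ ⊞ 1_{n-i}` : the permutation `τ` padded by `i` fixed points on the left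
and `n - i` fixed points on the right. -/
def ppad {n m : ℕ} (i : Fin (n + 1)) (τ : Perm (Fin (m + 1))) : Perm (Fin (n + m + 1)) :=
  pcast (show i.val + (m + 1) + (n - i.val) = n + m + 1 by have := i.isLt; omega)
    (bsum (bsum (1 : Perm (Fin i.val)) τ) (1 : Perm (Fin (n - i.val))))

/-- The shifted operadic composition `σ ∘ᵢ τ = (1_i ⊞ τ ⊞ 1_{n-i}) · s_i^m(σ)`. -/
def pcomp {n m : ℕ} (i : Fin (n + 1)) (σ : Perm (Fin (n + 1))) (τ : Perm (Fin (m + 1))) :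
    Perm (Fin (n + m + 1)) :=
  ppad i τ * pcast (show n + 1 + m = n + m + 1 by omega) (pdegenIter i σ m)


/-- A crossed simplicial group (Fiedorowicz–Loday): a sequence of groups `G n`
(`G n` is the group in simplicial degree `n`, acting on the `n+1`-element set `Fin (n+1)`),
with face and degeneracy maps satisfying the twisted (crossed) multiplicativity,
the usual simplicial identities, and compatibility of the action with faces and
degeneracies. -/
structure CrossedSimplicialGroup (G : ℕ → Type) [∀ n, Group (G n)] where
  /-- the action of `G n` on the set of vertices `Fin (n+1)` -/
  act : ∀ n, G n →* Equiv.Perm (Fin (n + 1))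
  /-- face maps -/
  d : ∀ n, Fin (n + 2) → G (n + 1) → G n
  /-- degeneracy maps -/
  s : ∀ n, Fin (n + 1) → G n → G (n + 1)
  /-- crossed multiplicativity of faces: `d_i (g₁ g₂) = d_i (g₁) · d_{g₁⁻¹ i} (g₂)` -/
  d_mul : ∀ n (i : Fin (n + 2)) (g₁ g₂ : G (n + 1)),
    d n i (g₁ * g₂) = d n i g₁ * d n ((act (n + 1) g₁).symm i) g₂
  /-- crossed multiplicativity of degeneracies -/
  s_mul : ∀ n (i : Fin (n + 1)) (g₁ g₂ : G n),
    s n i (g₁ * g₂) = s n i g₁ * s n ((act n g₁).symm i) g₂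
  /-- simplicial identity `d_i d_j = d_{j-1} d_i` for `i < j` -/
  dd : ∀ n (i j : Fin (n + 2)), i ≤ j → ∀ x : G (n + 2),
    d n i (d (n + 1) j.succ x) = d n j (d (n + 1) i.castSucc x)
  /-- simplicial identity `s_i s_j = s_{j+1} s_i` for `i ≤ j` -/
  ss : ∀ n (i j : Fin (n + 1)), i ≤ j → ∀ x : G n,
    s (n + 1) i.castSucc (s n j x) = s (n + 1) j.succ (s n i x)
  /-- simplicial identity `d_i s_j = s_{j-1} d_i` for `i < j` -/
  ds_le : ∀ n (i : Fin (n + 2)) (j : Fin (n + 1)), i ≤ j.castSucc → ∀ x : G (n + 1),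
    d (n + 1) i.castSucc (s (n + 1) j.succ x) = s n j (d n i x)
  /-- simplicial identity `d_i s_i = id` -/
  ds_self₁ : ∀ n (i : Fin (n + 1)) (x : G n), d n i.castSucc (s n i x) = x
  /-- simplicial identity `d_{i+1} s_i = id` -/
  ds_self₂ : ∀ n (i : Fin (n + 1)) (x : G n), d n i.succ (s n i x) = x
  /-- simplicial identity `d_i s_j = s_j d_{i-1}` for `i > j + 1` -/
  ds_gt : ∀ n (i : Fin (n + 2)) (j : Fin (n + 1)), j.castSucc < i → ∀ x : G (n + 1),
    d (n + 1) i.succ (s (n + 1) j.castSucc x) = s n j (d n i x)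
  /-- the action is compatible with faces -/
  act_d : ∀ n (i : Fin (n + 2)) (g : G (n + 1)), act n (d n i g) = pface i (act (n + 1) g)
  /-- the action is compatible with degeneracies -/
  act_s : ∀ n (i : Fin (n + 1)) (g : G n), act (n + 1) (s n i g) = pdegen i (act n g)

/-- The structural decomposition data of a crossed simplicial group `G`: a surjective
morphism of crossed simplicial groups `π : G → N` onto the structural quotient `N`
(one of the seven fundamental crossed simplicial groups); its kernel `P_* = ker π`
is automatically a simplicial group, since the action of `G` factors through `N`. -/
structure CSGProjection (G N : ℕ → Type) [∀ n, Group (G n)] [∀ n, Group (N n)] where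
  X : CrossedSimplicialGroup G
  Y : CrossedSimplicialGroup N
  /-- the structural projection -/
  proj : ∀ n, G n →* N n
  proj_surj : ∀ n, Function.Surjective (proj n)
  proj_d : ∀ n (i : Fin (n + 2)) (g : G (n + 1)),
    proj n (X.d n i g) = Y.d n i (proj (n + 1) g)
  proj_s : ∀ n (i : Fin (n + 1)) (g : G n),
    proj (n + 1) (X.s n i g) = Y.s n i (proj n g)
  proj_act : ∀ n (g : G n), Y.act n (proj n g) = X.act n g


lemma pface_succAbove {a : ℕ} (j : Fin (a + 1)) (σ : Perm (Fin (a + 1))) (b : Fin a) :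
    j.succAbove (pface j σ b) = σ ((σ.symm j).succAbove b) := by
  set e := (finSuccEquiv' (σ.symm j)).symm.trans (σ.trans (finSuccEquiv' j)) with he
  have h1 : e (some b) = some (pface j σ b) := by
    refine (Equiv.removeNone_some e ?_).symm
    simp only [he, Equiv.trans_apply, finSuccEquiv'_symm_some]
    rcases Option.eq_none_or_eq_some (finSuccEquiv' j (σ ((σ.symm j).succAbove b))) with h | h
    · rw [← finSuccEquiv'_at j] at h
      have := (finSuccEquiv' j).injective h
      exact absurd (by simpa using congrArg σ.symm this) ((σ.symm j).succAbove_ne b)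
    · exact h
  have h2 : (finSuccEquiv' j).symm (e (some b)) = σ ((σ.symm j).succAbove b) := by
    simp [he]
  rw [h1] at h2
  rw [← h2, finSuccEquiv'_symm_some]

lemma key_dd {G : ℕ → Type} [∀ n, Group (G n)] (X : CrossedSimplicialGroup G) (n : ℕ)
    (τ : Perm (Fin (n + 3))) (f : G (n + 2)) (i j : Fin (n + 3)) (hij : i < j) :
    X.d n ((pface j τ).symm ⟨i.val, by have := Fin.lt_def.mp hij; have := j.isLt; omega⟩)
      (X.d (n + 1) (τ.symm j) f)
    = X.d n ((pface i τ).symm ⟨j.val - 1, by have := j.isLt; omega⟩)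
      (X.d (n + 1) (τ.symm i) f) := by
  have hij' : i.val < j.val := Fin.lt_def.mp hij
  have hj := j.isLt
  have hpq : τ.symm i ≠ τ.symm j := fun h => absurd (τ.symm.injective.eq_iff.mp h) hij.ne
  rcases lt_or_gt_of_ne hpq with h | h
  · -- τ.symm i < τ.symm j
    have h' : (τ.symm i).val < (τ.symm j).val := Fin.lt_def.mp h
    have hq3 : (τ.symm j).val < n + 3 := (τ.symm j).isLt
    have hp2 : (τ.symm i).val < n + 2 := by omega
    have hq2 : (τ.symm j).val - 1 < n + 2 := by omega
    have L1 : j.succAbove ⟨i.val, by omega⟩ = i :=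
      (Fin.succAbove_of_castSucc_lt _ _ (by simpa using hij')).trans (Fin.ext rfl)
    have R1 : (τ.symm j).succAbove ⟨(τ.symm i).val, hp2⟩ = τ.symm i :=
      (Fin.succAbove_of_castSucc_lt _ _ (by simpa using h')).trans (Fin.ext rfl)
    have e1 : (pface j τ).symm ⟨i.val, by omega⟩ = ⟨(τ.symm i).val, hp2⟩ :=
      (Equiv.symm_apply_eq _).mpr (Fin.succAbove_right_injective (p := j)
        (L1.trans (((congrArg τ R1).trans (τ.apply_symm_apply i)).symm.trans
          (pface_succAbove j τ _).symm)))
    have L2 : i.succAbove ⟨j.val - 1, by omega⟩ = j :=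
      (Fin.succAbove_of_le_castSucc _ _ (Fin.le_def.mpr
        (by simp only [Fin.coe_castSucc]; omega))).trans
        (Fin.ext (by simp only [Fin.val_succ]; omega))
    have R2 : (τ.symm i).succAbove ⟨(τ.symm j).val - 1, hq2⟩ = τ.symm j :=
      (Fin.succAbove_of_le_castSucc _ _ (Fin.le_def.mpr
        (by simp only [Fin.coe_castSucc]; omega))).trans
        (Fin.ext (by simp only [Fin.val_succ]; omega))
    have e2 : (pface i τ).symm ⟨j.val - 1, by omega⟩ = ⟨(τ.symm j).val - 1, hq2⟩ :=
      (Equiv.symm_apply_eq _).mpr (Fin.succAbove_right_injective (p := i)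
        (L2.trans (((congrArg τ R2).trans (τ.apply_symm_apply j)).symm.trans
          (pface_succAbove i τ _).symm)))
    have hs : (⟨(τ.symm j).val - 1, hq2⟩ : Fin (n + 2)).succ = τ.symm j :=
      Fin.ext (by simp only [Fin.val_succ]; omega)
    have hc : (⟨(τ.symm i).val, hp2⟩ : Fin (n + 2)).castSucc = τ.symm i := Fin.ext rfl
    calc
      X.d n ((pface j τ).symm ⟨i.val, by omega⟩) (X.d (n + 1) (τ.symm j) f)
          = X.d n ⟨(τ.symm i).val, hp2⟩ (X.d (n + 1) (τ.symm j) f) :=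
        congrArg (fun t => X.d n t (X.d (n + 1) (τ.symm j) f)) e1
      _ = X.d n ⟨(τ.symm i).val, hp2⟩
            (X.d (n + 1) ((⟨(τ.symm j).val - 1, hq2⟩ : Fin (n + 2)).succ) f) :=
        (congrArg (X.d n ⟨(τ.symm i).val, hp2⟩)
          (congrArg (fun t => X.d (n + 1) t f) hs)).symm
      _ = X.d n ⟨(τ.symm j).val - 1, hq2⟩
            (X.d (n + 1) ((⟨(τ.symm i).val, hp2⟩ : Fin (n + 2)).castSucc) f) :=
        X.dd n ⟨(τ.symm i).val, hp2⟩ ⟨(τ.symm j).val - 1, hq2⟩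
          (Fin.mk_le_mk.mpr (by omega)) f
      _ = X.d n ⟨(τ.symm j).val - 1, hq2⟩ (X.d (n + 1) (τ.symm i) f) :=
        congrArg (X.d n ⟨(τ.symm j).val - 1, hq2⟩)
          (congrArg (fun t => X.d (n + 1) t f) hc)
      _ = X.d n ((pface i τ).symm ⟨j.val - 1, by omega⟩) (X.d (n + 1) (τ.symm i) f) :=
        (congrArg (fun t => X.d n t (X.d (n + 1) (τ.symm i) f)) e2).symm
  · -- τ.symm j < τ.symm i
    have h' : (τ.symm j).val < (τ.symm i).val := Fin.lt_def.mp h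
    have hp3 : (τ.symm i).val < n + 3 := (τ.symm i).isLt
    have hq2 : (τ.symm j).val < n + 2 := by omega
    have hp2 : (τ.symm i).val - 1 < n + 2 := by omega
    have L1 : j.succAbove ⟨i.val, by omega⟩ = i :=
      (Fin.succAbove_of_castSucc_lt _ _ (by simpa using hij')).trans (Fin.ext rfl)
    have R1 : (τ.symm j).succAbove ⟨(τ.symm i).val - 1, hp2⟩ = τ.symm i :=
      (Fin.succAbove_of_le_castSucc _ _ (Fin.le_def.mpr
        (by simp only [Fin.coe_castSucc]; omega))).trans
        (Fin.ext (by simp only [Fin.val_succ]; omega))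
    have e1 : (pface j τ).symm ⟨i.val, by omega⟩ = ⟨(τ.symm i).val - 1, hp2⟩ :=
      (Equiv.symm_apply_eq _).mpr (Fin.succAbove_right_injective (p := j)
        (L1.trans (((congrArg τ R1).trans (τ.apply_symm_apply i)).symm.trans
          (pface_succAbove j τ _).symm)))
    have L2 : i.succAbove ⟨j.val - 1, by omega⟩ = j :=
      (Fin.succAbove_of_le_castSucc _ _ (Fin.le_def.mpr
        (by simp only [Fin.coe_castSucc]; omega))).trans
        (Fin.ext (by simp only [Fin.val_succ]; omega))
    have R2 : (τ.symm i).succAbove ⟨(τ.symm j).val, hq2⟩ = τ.symm j :=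
      (Fin.succAbove_of_castSucc_lt _ _ (by simpa using h')).trans (Fin.ext rfl)
    have e2 : (pface i τ).symm ⟨j.val - 1, by omega⟩ = ⟨(τ.symm j).val, hq2⟩ :=
      (Equiv.symm_apply_eq _).mpr (Fin.succAbove_right_injective (p := i)
        (L2.trans (((congrArg τ R2).trans (τ.apply_symm_apply j)).symm.trans
          (pface_succAbove i τ _).symm)))
    have hs : (⟨(τ.symm i).val - 1, hp2⟩ : Fin (n + 2)).succ = τ.symm i :=
      Fin.ext (by simp only [Fin.val_succ]; omega)
    have hc : (⟨(τ.symm j).val, hq2⟩ : Fin (n + 2)).castSucc = τ.symm j := Fin.ext rfl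
    calc
      X.d n ((pface j τ).symm ⟨i.val, by omega⟩) (X.d (n + 1) (τ.symm j) f)
          = X.d n ⟨(τ.symm i).val - 1, hp2⟩ (X.d (n + 1) (τ.symm j) f) :=
        congrArg (fun t => X.d n t (X.d (n + 1) (τ.symm j) f)) e1
      _ = X.d n ⟨(τ.symm i).val - 1, hp2⟩
            (X.d (n + 1) ((⟨(τ.symm j).val, hq2⟩ : Fin (n + 2)).castSucc) f) :=
        (congrArg (X.d n ⟨(τ.symm i).val - 1, hp2⟩)
          (congrArg (fun t => X.d (n + 1) t f) hc)).symm
      _ = X.d n ⟨(τ.symm j).val, hq2⟩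
            (X.d (n + 1) ((⟨(τ.symm i).val - 1, hp2⟩ : Fin (n + 2)).succ) f) :=
        (X.dd n ⟨(τ.symm j).val, hq2⟩ ⟨(τ.symm i).val - 1, hp2⟩
          (Fin.mk_le_mk.mpr (by omega)) f).symm
      _ = X.d n ⟨(τ.symm j).val, hq2⟩ (X.d (n + 1) (τ.symm i) f) :=
        congrArg (X.d n ⟨(τ.symm j).val, hq2⟩)
          (congrArg (fun t => X.d (n + 1) t f) hs)
      _ = X.d n ((pface i τ).symm ⟨j.val - 1, by omega⟩) (X.d (n + 1) (τ.symm i) f) :=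
        (congrArg (fun t => X.d n t (X.d (n + 1) (τ.symm i) f)) e2).symm

/-- the simplicial identity `d_i d_j = d_{j-1} d_i` (for `i < j`) for
the face functors of the action groupoids `Γ_* = G_* ⫽ P_*`: on the morphism part,
for every `[σ, f]` with `σ ∈ N_n`, `f ∈ G_n`,
`d_{d_j(σ)⁻¹(i)}(d_{σ⁻¹(j)}(f)) = d_{d_i(σ)⁻¹(j-1)}(d_{σ⁻¹(i)}(f))`. -/
theorem gamma_dd (G N : ℕ → Type) [∀ n, Group (G n)] [∀ n, Group (N n)]
    (P : CSGProjection G N) (n : ℕ) (σ : N (n + 2)) (f : G (n + 2))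
    (i j : Fin (n + 3)) (hij : i < j) :
    P.X.d n ((P.Y.act (n + 1) (P.Y.d (n + 1) j σ)).symm
        ⟨i.val, by have h : i.val < j.val := hij; have := j.isLt; omega⟩)
      (P.X.d (n + 1) ((P.Y.act (n + 2) σ).symm j) f)
    = P.X.d n ((P.Y.act (n + 1) (P.Y.d (n + 1) i σ)).symm
        ⟨j.val - 1, by have := j.isLt; omega⟩)
      (P.X.d (n + 1) ((P.Y.act (n + 2) σ).symm i) f) := by
  rw [P.Y.act_d, P.Y.act_d]
  exact key_dd P.X n (P.Y.act (n + 2) σ) f i j hij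

end CSGPaper
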